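/- Let F be a field, x, a, b ∈ F, and j ∈ ℕ with a + b = x − (j − 1) in F (for j ≥ 1; equivalently a + b + j − 1 = x). Assume a + i ≠ 0 and b + i ≠ 0 in F for all natural numbers 0 ≤ i < j. Then ⟨x; a⟩_j · ⟨x; b⟩_j = 1. -/

import Mathlib

open Finset

/-- The Pochhammer-type product `⟨x; a⟩_j = ∏_{i=0}^{j−1} (a + i − x)/(a + i)`. -/
noncomputable def ab {F : Type*} [Field F] (x a : F) (j : ℕ) : F :=
  ∏ i ∈ Finset.range j, (a + (i : F) - x) / (a + (i : F))

lemma ab_num {F : Type*} [Field F] (x a b : F) (j : ℕ)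
    (hab : a + b = x - ((j : F) - 1)) :
    ∏ i ∈ Finset.range j, (a + (i : F) - x) = (-1) ^ j * ∏ i ∈ Finset.range j, (b + (i : F)) := by
  have h : ∏ i ∈ Finset.range j, (b + (i : F))
      = ∏ i ∈ Finset.range j, (b + ((j - 1 - i : ℕ) : F)) :=
    (Finset.prod_range_reflect (fun i => (b + (i : F))) j).symm
  rw [h, show ((-1:F))^j = ∏ _i ∈ Finset.range j, (-1:F) by simp, ← Finset.prod_mul_distrib]
  apply Finset.prod_congr rfl
  intro i hi
  rw [Finset.mem_range] at hi
  have h1 : ((j - 1 - i : ℕ) : F) = (j : F) - 1 - (i : F) := by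
    have : i ≤ j - 1 := Nat.le_sub_one_of_lt hi
    rw [Nat.cast_sub this, Nat.cast_sub (Nat.one_le_iff_ne_zero.mpr (by omega))]
    push_cast; ring
  rw [h1]
  have hx : x = a + b + ((j : F) - 1) := by rw [hab]; ring
  rw [hx]; ring

/-- **Cancellation identity for `⟨x; ·⟩_j` (equation (5.2)).**
If `a + b = x − (j − 1)` and all denominators `a + i`, `b + i` (`0 ≤ i < j`) are nonzero,
then `⟨x; a⟩_j · ⟨x; b⟩_j = 1`. -/
theorem ab_cancel {F : Type*} [Field F] (x a b : F) (j : ℕ)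
    (hab : a + b = x - ((j : F) - 1))
    (ha : ∀ i : ℕ, i < j → a + (i : F) ≠ 0)
    (hb : ∀ i : ℕ, i < j → b + (i : F) ≠ 0) :
    ab x a j * ab x b j = 1 := by
  have hDa : ∏ i ∈ Finset.range j, (a + (i : F)) ≠ 0 :=
    Finset.prod_ne_zero_iff.mpr fun i hi => ha i (Finset.mem_range.mp hi)
  have hDb : ∏ i ∈ Finset.range j, (b + (i : F)) ≠ 0 :=
    Finset.prod_ne_zero_iff.mpr fun i hi => hb i (Finset.mem_range.mp hi)
  have h1 := ab_num x a b j hab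
  have h2 := ab_num x b a j (by rw [add_comm]; exact hab)
  unfold ab
  rw [Finset.prod_div_distrib, Finset.prod_div_distrib, h1, h2]
  field_simp
  have h3 : ((-1:F)) ^ j * (-1) ^ j = 1 := by
    rw [← pow_add, ← two_mul, pow_mul]; norm_num
  rw [sq, h3]
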